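/- arXiv:2005.10418 — 4 statements merged into one kernel-verified Lean document; each statement's English description precedes it below -/
import Mathlib

section
/- Let $N \geq 1$, let $f, \hat{f} : \mathbb{R}^N \to \mathbb{R}$ be differentiable, each with $c$-Lipschitz gradient ($c > 0$), let $\epsilon \geq 0$, $r \geq 0$, and let $x_1, x_2 \in \mathbb{R}^N$ with $x_1 \neq x_2$, $|\hat{f}(x_1) - f(x_1)| \leq \epsilon$ and $|\hat{f}(x_2) - f(x_2)| \leq \epsilon$. Set $z = x_2 - x_1$. Then for every $x \in \mathbb{R}^N$ with $\|x - x_1\| \leq r$, one has $(\nabla \hat{f}(x) - \nabla f(x)) \cdot z \leq 2\epsilon + 2c\|z\|^2 + 2cr\|z\|$. -/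
open scoped RealInnerProductSpace

set_option maxHeartbeats 1000000

/-- Gradient-difference bound near a data point: if `f, f̂ : ℝ^N → ℝ` are differentiable with
`c`-Lipschitz gradients and agree up to error `ε` at `x₁ ≠ x₂`, then with `z = x₂ - x₁`,
for every `x` with `‖x - x₁‖ ≤ r` one has
`(∇f̂(x) - ∇f(x)) ⬝ z ≤ 2ε + 2c‖z‖² + 2cr‖z‖`. -/
theorem stmt_2 (N : ℕ) (hN : 1 ≤ N)
    (f fhat : EuclideanSpace ℝ (Fin N) → ℝ)
    (hf : Differentiable ℝ f) (hfhat : Differentiable ℝ fhat)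
    (c : ℝ) (hc : 0 < c)
    (hflip : ∀ a b, ‖gradient f a - gradient f b‖ ≤ c * ‖a - b‖)
    (hfhatlip : ∀ a b, ‖gradient fhat a - gradient fhat b‖ ≤ c * ‖a - b‖)
    (ε : ℝ) (hε : 0 ≤ ε) (r : ℝ) (hr : 0 ≤ r)
    (x₁ x₂ : EuclideanSpace ℝ (Fin N)) (hne : x₁ ≠ x₂)
    (h₁ : |fhat x₁ - f x₁| ≤ ε) (h₂ : |fhat x₂ - f x₂| ≤ ε)
    (x : EuclideanSpace ℝ (Fin N)) (hx : ‖x - x₁‖ ≤ r) :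
    ⟪gradient fhat x - gradient f x, x₂ - x₁⟫ ≤
      2 * ε + 2 * c * ‖x₂ - x₁‖ ^ 2 + 2 * c * r * ‖x₂ - x₁‖ := by
  classical
  set z := x₂ - x₁ with hz
  set G : EuclideanSpace ℝ (Fin N) → EuclideanSpace ℝ (Fin N) :=
    fun y => gradient fhat y - gradient f y with hG
  have hGlip : ∀ a b, ‖G a - G b‖ ≤ 2 * c * ‖a - b‖ := by
    intro a b
    have he : G a - G b = (gradient fhat a - gradient fhat b) - (gradient f a - gradient f b) := by
      simp only [hG]; abel
    rw [he]
    calc ‖(gradient fhat a - gradient fhat b) - (gradient f a - gradient f b)‖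
        ≤ ‖gradient fhat a - gradient fhat b‖ + ‖gradient f a - gradient f b‖ :=
          norm_sub_le _ _
      _ ≤ c * ‖a - b‖ + c * ‖a - b‖ := add_le_add (hfhatlip a b) (hflip a b)
      _ = 2 * c * ‖a - b‖ := by ring
  set w := G x₁ with hw
  set W : EuclideanSpace ℝ (Fin N) →L[ℝ] ℝ :=
    InnerProductSpace.toDual ℝ (EuclideanSpace ℝ (Fin N)) w with hW
  have hWapp : ∀ v, W v = ⟪w, v⟫ := fun v => rfl
  have hDG : ∀ y, InnerProductSpace.toDual ℝ (EuclideanSpace ℝ (Fin N)) (G y)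
      = fderiv ℝ fhat y - fderiv ℝ f y := by
    intro y
    simp only [hG, gradient, map_sub, LinearIsometryEquiv.apply_symm_apply]
  have hhderiv : ∀ y, HasFDerivAt (fun u => (fhat u - f u) - W u)
      ((fderiv ℝ fhat y - fderiv ℝ f y) - W) y := by
    intro y
    exact ((hfhat y).hasFDerivAt.sub (hf y).hasFDerivAt).sub W.hasFDerivAt
  have key : ‖((fhat x₂ - f x₂) - W x₂) - ((fhat x₁ - f x₁) - W x₁)‖
      ≤ (2 * c * ‖z‖) * ‖x₂ - x₁‖ := by
    refine (convex_closedBall x₁ ‖z‖).norm_image_sub_le_of_norm_hasFDerivWithin_le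
      (fun y _ => (hhderiv y).hasFDerivWithinAt) (fun y hy => ?_) ?_ ?_
    · have he : (fderiv ℝ fhat y - fderiv ℝ f y) - W
          = InnerProductSpace.toDual ℝ (EuclideanSpace ℝ (Fin N)) (G y - w) := by
        rw [map_sub, hDG y, hW]
      rw [he, LinearIsometryEquiv.norm_map]
      calc ‖G y - w‖ ≤ 2 * c * ‖y - x₁‖ := hGlip y x₁
        _ ≤ 2 * c * ‖z‖ := by
            have hb : ‖y - x₁‖ ≤ ‖z‖ := mem_closedBall_iff_norm.mp hy
            nlinarith
    · exact Metric.mem_closedBall_self (norm_nonneg _)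
    · exact mem_closedBall_iff_norm.mpr le_rfl
  have hWz : W z = W x₂ - W x₁ := by rw [hz, map_sub]
  have hinner1 : ⟪w, z⟫ ≤ 2 * ε + 2 * c * ‖z‖ ^ 2 := by
    have h1 : |((fhat x₂ - f x₂) - (fhat x₁ - f x₁)) - W z| ≤ 2 * c * ‖z‖ * ‖z‖ := by
      have he : ((fhat x₂ - f x₂) - (fhat x₁ - f x₁)) - W z
          = ((fhat x₂ - f x₂) - W x₂) - ((fhat x₁ - f x₁) - W x₁) := by
        rw [hWz]; ring
      rw [he]
      have := key
      rw [Real.norm_eq_abs] at this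
      nlinarith [norm_nonneg z]
    have h2 := neg_le_of_abs_le h1
    have h3 := abs_le.mp h₁
    have h4 := abs_le.mp h₂
    have h5 := hWapp z
    have hsq : ‖z‖ * ‖z‖ = ‖z‖ ^ 2 := (sq ‖z‖).symm
    rw [← h5]
    linarith
  have hinner2 : ⟪G x - w, z⟫ ≤ 2 * c * r * ‖z‖ := by
    calc ⟪G x - w, z⟫ ≤ ‖G x - w‖ * ‖z‖ := real_inner_le_norm _ _
      _ ≤ (2 * c * ‖x - x₁‖) * ‖z‖ := by
          have h6 := hGlip x x₁
          nlinarith [norm_nonneg z, norm_nonneg (G x - w)]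
      _ ≤ 2 * c * r * ‖z‖ := by gcongr
  have hsplit : ⟪G x, z⟫ = ⟪w, z⟫ + ⟪G x - w, z⟫ := by
    simp only [inner_sub_left]; ring
  have hfin : ⟪G x, z⟫ ≤ 2 * ε + 2 * c * ‖z‖ ^ 2 + 2 * c * r * ‖z‖ := by
    rw [hsplit]; linarith
  exact hfin
end

section
/- Let $N \geq 1$, let $f, \hat{f} : \mathbb{R}^N \to \mathbb{R}$ be differentiable, each with $c$-Lipschitz gradient ($c > 0$), let $\epsilon \geq 0$, $r > 0$, and let $D \subseteq \mathbb{R}^N$ be a set with $|\hat{f}(p) - f(p)| \leq \epsilon$ for all $p \in D$. Set $\Delta x = r + \sqrt{6r^2 + \epsilon/c}$. Let $x \in \mathbb{R}^N$ be such that every point $y$ with $\|y - x\| \leq \Delta x + r$ lies within distance $r$ of some point of $D$. Then $\|\nabla \hat{f}(x) - \nabla f(x)\| \leq 4\sqrt{6r^2c^2 + \epsilon c} + 10rc$. -/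
open InnerProductSpace
open scoped RealInnerProductSpace

/-- If the gradient of `g` stays within distance `C` of a fixed vector `G` on the segment
`[a, b]`, then `g b - g a` differs from `⟪G, b - a⟫` by at most `C * ‖b - a‖`. -/
lemma key_seg {E : Type*} [NormedAddCommGroup E] [InnerProductSpace ℝ E] [CompleteSpace E]
    (g : E → ℝ) (hg : Differentiable ℝ g) (G : E) (C : ℝ)
    (a b : E) (hbd : ∀ z ∈ segment ℝ a b, ‖gradient g z - G‖ ≤ C) :
    |g b - g a - ⟪G, b - a⟫| ≤ C * ‖b - a‖ := by
  have h := (convex_segment a b).norm_image_sub_le_of_norm_fderiv_le'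
    (f := g) (φ := (toDual ℝ E G : E →L[ℝ] ℝ)) (C := C)
    (fun z _ => hg.differentiableAt) ?_ (left_mem_segment ℝ a b) (right_mem_segment ℝ a b)
  · simpa [Real.norm_eq_abs, toDual_apply_apply] using h
  · intro z hz
    have hz' : fderiv ℝ g z = toDual ℝ E (gradient g z) :=
      ((toDual ℝ E).apply_symm_apply _).symm
    rw [hz', ← map_sub, (toDual ℝ E).norm_map]
    exact hbd z hz

set_option maxHeartbeats 1000000 in
/-- Central gradient-approximation bound: if `f, f̂ : ℝ^N → ℝ` are differentiable with
`c`-Lipschitz gradients, `|f̂ - f| ≤ ε` on a data set `D`, and every point within distance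
`Δx + r` of `x` (where `Δx = r + √(6r² + ε/c)`) lies within distance `r` of `D`, then
`‖∇f̂(x) - ∇f(x)‖ ≤ 4√(6r²c² + εc) + 10rc`. -/
theorem stmt_5 (N : ℕ) (hN : 1 ≤ N)
    (f fhat : EuclideanSpace ℝ (Fin N) → ℝ)
    (hf : Differentiable ℝ f) (hfhat : Differentiable ℝ fhat)
    (c : ℝ) (hc : 0 < c)
    (hflip : ∀ a b, ‖gradient f a - gradient f b‖ ≤ c * ‖a - b‖)
    (hfhatlip : ∀ a b, ‖gradient fhat a - gradient fhat b‖ ≤ c * ‖a - b‖)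
    (ε : ℝ) (hε : 0 ≤ ε) (r : ℝ) (hr : 0 < r)
    (D : Set (EuclideanSpace ℝ (Fin N)))
    (hD : ∀ p ∈ D, |fhat p - f p| ≤ ε)
    (x : EuclideanSpace ℝ (Fin N))
    (hfill : ∀ y : EuclideanSpace ℝ (Fin N),
      ‖y - x‖ ≤ (r + Real.sqrt (6 * r ^ 2 + ε / c)) + r →
        ∃ p ∈ D, ‖y - p‖ ≤ r) :
    ‖gradient fhat x - gradient f x‖ ≤
      4 * Real.sqrt (6 * r ^ 2 * c ^ 2 + ε * c) + 10 * r * c := by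
  set t : ℝ := Real.sqrt (6 * r ^ 2 + ε / c) with htdef
  have ht0 : 0 ≤ t := Real.sqrt_nonneg _
  have ht2 : t ^ 2 = 6 * r ^ 2 + ε / c := Real.sq_sqrt (by positivity)
  have hct2 : c * t ^ 2 = 6 * c * r ^ 2 + ε := by
    rw [ht2]; field_simp
  have htr : r < t := by
    refine lt_of_pow_lt_pow_left₀ 2 ht0 ?_
    rw [ht2]; nlinarith [div_nonneg hε hc.le]
  have hsqrt : Real.sqrt (6 * r ^ 2 * c ^ 2 + ε * c) = c * t := by
    rw [show 6 * r ^ 2 * c ^ 2 + ε * c = c ^ 2 * (6 * r ^ 2 + ε / c) by field_simp,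
      Real.sqrt_mul (sq_nonneg c), Real.sqrt_sq hc.le]
  rw [hsqrt]
  -- the difference function and its gradient
  set g : EuclideanSpace ℝ (Fin N) → ℝ := fun z => fhat z - f z with hgdef
  have hg : Differentiable ℝ g := hfhat.sub hf
  have hgrad : ∀ z, gradient g z = gradient fhat z - gradient f z := by
    intro z
    show (toDual ℝ (EuclideanSpace ℝ (Fin N))).symm (fderiv ℝ g z) = _
    rw [show fderiv ℝ g z = fderiv ℝ fhat z - fderiv ℝ f z from fderiv_sub (hfhat z) (hf z),
      map_sub]
    rfl
  set G : EuclideanSpace ℝ (Fin N) := gradient fhat x - gradient f x with hGdef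
  have hGx : G = gradient g x := (hgrad x).symm
  have hgl : ∀ a b : EuclideanSpace ℝ (Fin N),
      ‖gradient g a - gradient g b‖ ≤ 2 * c * ‖a - b‖ := by
    intro a b
    rw [hgrad a, hgrad b]
    calc ‖gradient fhat a - gradient f a - (gradient fhat b - gradient f b)‖
        = ‖(gradient fhat a - gradient fhat b) - (gradient f a - gradient f b)‖ := by
          congr 1; abel
      _ ≤ ‖gradient fhat a - gradient fhat b‖ + ‖gradient f a - gradient f b‖ :=
          norm_sub_le _ _
      _ ≤ c * ‖a - b‖ + c * ‖a - b‖ := add_le_add (hfhatlip a b) (hflip a b)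
      _ = 2 * c * ‖a - b‖ := by ring
  by_cases hG0 : G = 0
  · rw [hG0, norm_zero]; positivity
  set M : ℝ := ‖G‖ with hMdef
  have hM : 0 < M := norm_pos_iff.mpr hG0
  set Δ : ℝ := r + t with hΔdef
  have hΔ0 : 0 < Δ := by positivity
  -- the probe direction
  set d : EuclideanSpace ℝ (Fin N) := (Δ / M) • G with hddef
  have hd : ‖d‖ = Δ := by
    rw [hddef, norm_smul, Real.norm_eq_abs, abs_of_pos (div_pos hΔ0 hM), ← hMdef]
    field_simp
  have hGd : ⟪G, d⟫ = Δ * M := by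
    rw [hddef, real_inner_smul_right, real_inner_self_eq_norm_sq, ← hMdef]
    field_simp
  -- segment estimate specialized to balls around x
  have hseg : ∀ (a b : EuclideanSpace ℝ (Fin N)) (ρ : ℝ), ‖a - x‖ ≤ ρ → ‖b - x‖ ≤ ρ →
      |g b - g a - ⟪G, b - a⟫| ≤ 2 * c * ρ * ‖b - a‖ := by
    intro a b ρ ha hb
    refine key_seg g hg G _ a b ?_
    intro z hz
    have hz' : z ∈ Metric.closedBall x ρ :=
      (convex_closedBall x ρ).segment_subset
        (by simpa [Metric.mem_closedBall, dist_eq_norm] using ha)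
        (by simpa [Metric.mem_closedBall, dist_eq_norm] using hb) hz
    have hzx : ‖z - x‖ ≤ ρ := by
      simpa [Metric.mem_closedBall, dist_eq_norm] using hz'
    calc ‖gradient g z - G‖ = ‖gradient g z - gradient g x‖ := by rw [hGx]
      _ ≤ 2 * c * ‖z - x‖ := hgl z x
      _ ≤ 2 * c * ρ := by
          have := mul_le_mul_of_nonneg_left hzx (by positivity : (0:ℝ) ≤ 2 * c)
          linarith
  -- the three intermediate points
  set x1 : EuclideanSpace ℝ (Fin N) := x + (1/3 : ℝ) • d with hx1def
  set x2 : EuclideanSpace ℝ (Fin N) := x + (2/3 : ℝ) • d with hx2def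
  set y : EuclideanSpace ℝ (Fin N) := x + d with hydef
  have hx1x : x1 - x = (1/3 : ℝ) • d := by rw [hx1def]; abel
  have hx2x : x2 - x = (2/3 : ℝ) • d := by rw [hx2def]; abel
  have hyx : y - x = d := by rw [hydef]; abel
  have hx21 : x2 - x1 = (1/3 : ℝ) • d := by rw [hx1def, hx2def]; module
  have hyx2 : y - x2 = (1/3 : ℝ) • d := by rw [hydef, hx2def]; module
  have hn13 : ‖(1/3 : ℝ) • d‖ = Δ / 3 := by
    rw [norm_smul, Real.norm_eq_abs, hd, abs_of_nonneg (by norm_num : (0:ℝ) ≤ 1/3)]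
    ring
  have hn23 : ‖(2/3 : ℝ) • d‖ = 2 * Δ / 3 := by
    rw [norm_smul, Real.norm_eq_abs, hd, abs_of_nonneg (by norm_num : (0:ℝ) ≤ 2/3)]
    ring
  have hin13 : ⟪G, (1/3 : ℝ) • d⟫ = Δ * M / 3 := by
    rw [real_inner_smul_right, hGd]; ring
  -- lower bound on g y - g x
  have h1 : |g x1 - g x - Δ * M / 3| ≤ 2 * c * (Δ/3) * (Δ/3) := by
    have := hseg x x1 (Δ/3) (by simp; positivity) (by rw [hx1x, hn13])
    rwa [hx1x, hn13, hin13] at this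
  have h2 : |g x2 - g x1 - Δ * M / 3| ≤ 2 * c * (2*Δ/3) * (Δ/3) := by
    have := hseg x1 x2 (2*Δ/3)
      (by rw [hx1x, hn13]; linarith) (by rw [hx2x, hn23])
    rwa [hx21, hn13, hin13] at this
  have h3 : |g y - g x2 - Δ * M / 3| ≤ 2 * c * Δ * (Δ/3) := by
    have := hseg x2 y Δ (by rw [hx2x, hn23]; linarith) (by rw [hyx, hd])
    rwa [hyx2, hn13, hin13] at this
  have hlow : Δ * M - (4/3) * (c * Δ^2) ≤ g y - g x := by
    have e1 := (abs_le.mp h1).1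
    have e2 := (abs_le.mp h2).1
    have e3 := (abs_le.mp h3).1
    have r1 : 2 * c * (Δ/3) * (Δ/3) = (2/9) * (c * Δ^2) := by ring
    have r2 : 2 * c * (2*Δ/3) * (Δ/3) = (4/9) * (c * Δ^2) := by ring
    have r3 : 2 * c * Δ * (Δ/3) = (6/9) * (c * Δ^2) := by ring
    rw [r1] at e1; rw [r2] at e2; rw [r3] at e3
    linarith
  -- data point near x
  obtain ⟨p, hpD, hpx⟩ := hfill x (by simp; positivity)
  have hpx' : ‖p - x‖ ≤ r := by rwa [norm_sub_rev] at hpx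
  have h4 : |g x - g p - ⟪G, x - p⟫| ≤ 2 * c * r * ‖x - p‖ :=
    hseg p x r hpx' (by simp [hr.le])
  have h4' : |g x - g p - ⟪G, x - p⟫| ≤ 2 * (c * r^2) := by
    refine h4.trans ?_
    have := mul_le_mul_of_nonneg_left hpx (by positivity : (0:ℝ) ≤ 2 * c * r)
    linarith [this]
  have hip : |⟪G, x - p⟫| ≤ M * r := by
    calc |⟪G, x - p⟫| ≤ ‖G‖ * ‖x - p‖ := abs_real_inner_le_norm G (x - p)
      _ ≤ M * r := mul_le_mul_of_nonneg_left hpx (norm_nonneg G)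
  have hgp : |g p| ≤ ε := hD p hpD
  have hgxlow : -ε - M * r - 2 * (c * r^2) ≤ g x := by
    have e4 := (abs_le.mp h4').1
    have eip := (abs_le.mp hip).1
    have egp := (abs_le.mp hgp).1
    linarith
  -- data point near y
  obtain ⟨q, hqD, hqy⟩ := hfill y (by rw [hyx, hd]; linarith)
  have hqy' : ‖q - y‖ ≤ r := by rwa [norm_sub_rev] at hqy
  have hqx : ‖q - x‖ ≤ Δ + r := by
    calc ‖q - x‖ ≤ ‖q - y‖ + ‖y - x‖ := norm_sub_le_norm_sub_add_norm_sub q y x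
      _ ≤ r + Δ := add_le_add hqy' (le_of_eq (by rw [hyx, hd]))
      _ = Δ + r := by ring
  have h5 : |g y - g q - ⟪G, y - q⟫| ≤ 2 * c * (Δ + r) * ‖y - q‖ :=
    hseg q y (Δ + r) hqx (by rw [hyx, hd]; linarith)
  have h5' : |g y - g q - ⟪G, y - q⟫| ≤ 2 * c * (Δ + r) * r := by
    refine h5.trans (mul_le_mul_of_nonneg_left hqy (by positivity))
  have hiq : |⟪G, y - q⟫| ≤ M * r := by
    calc |⟪G, y - q⟫| ≤ ‖G‖ * ‖y - q‖ := abs_real_inner_le_norm G (y - q)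
      _ ≤ M * r := mul_le_mul_of_nonneg_left hqy (norm_nonneg G)
  have hgq : |g q| ≤ ε := hD q hqD
  have hgyhigh : g y ≤ ε + M * r + 2 * c * (Δ + r) * r := by
    have e5 := (abs_le.mp h5').2
    have eiq := (abs_le.mp hiq).2
    have egq := (abs_le.mp hgq).2
    linarith
  -- combine
  clear_value t g G M Δ d x1 x2 y
  have hB : Δ * M - (4/3) * (c * Δ^2) ≤
      2*ε + 2*(M*r) + 2 * c * (Δ + r) * r + 2*(c*r^2) := by
    linarith [hlow, hgxlow, hgyhigh]
  have hcr : 0 ≤ c * r * (t - r) :=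
    mul_nonneg (mul_nonneg hc.le hr.le) (sub_nonneg.mpr htr.le)
  have hfin : M * (t - r) ≤ (4 * (c * t) + 10 * r * c) * (t - r) := by
    rw [hΔdef] at hB
    nlinarith [hB, hct2, hcr, hε, hM.le, ht0, hr.le]
  have := (mul_le_mul_iff_of_pos_right (sub_pos.mpr htr)).mp hfin
  linarith
end

section
/- Let $N \geq 1$, let $f : \mathbb{R}^N \to \mathbb{R}$ be differentiable with $c$-Lipschitz gradient ($c > 0$), and for each $k \in \mathbb{N}$ let $\hat{f}_k : \mathbb{R}^N \to \mathbb{R}$ be differentiable with $c$-Lipschitz gradient, let $D_k \subseteq \mathbb{R}^N$ satisfy $|\hat{f}_k(p) - f(p)| \leq \epsilon_k$ for all $p \in D_k$ and be such that every point of $\mathbb{R}^N$ lies within distance $r_k > 0$ of some point of $D_k$. If $r_k \to 0$ and $\epsilon_k \to 0$ as $k \to \infty$, then $\sup_{x \in \mathbb{R}^N} \|\nabla \hat{f}_k(x) - \nabla f(x)\| \leq 4\sqrt{6r_k^2c^2 + \epsilon_k c} + 10 r_k c \to 0$, i.e., the gradients $\nabla \hat{f}_k$ converge uniformly to $\nabla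 f$. -/
open Filter

open InnerProductSpace

local notation "⟪" x ", " y "⟫" => @inner ℝ _ _ x y

section
variable {E : Type*} [NormedAddCommGroup E] [InnerProductSpace ℝ E] [CompleteSpace E]

lemma grad_inner_eq (h : E → ℝ) (a v : E) :
    ⟪gradient h a, v⟫ = fderiv ℝ h a v := by
  simp only [gradient, InnerProductSpace.toDual_symm_apply]

lemma fderiv_sub_norm_eq (h : E → ℝ) (a b : E) :
    ‖fderiv ℝ h a - fderiv ℝ h b‖ = ‖gradient h a - gradient h b‖ := by
  simp only [gradient]
  rw [← map_sub, LinearIsometryEquiv.norm_map]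

lemma taylor_aux (h : E → ℝ) (hd : Differentiable ℝ h) (L : ℝ) (hL : 0 ≤ L)
    (hlip : ∀ a b, ‖gradient h a - gradient h b‖ ≤ L * ‖a - b‖)
    (a b : E) : |h b - h a - ⟪gradient h a, b - a⟫| ≤ L * ‖b - a‖ ^ 2 := by
  have key : ‖h b - h a - (fderiv ℝ h a) (b - a)‖ ≤ (L * ‖b - a‖) * ‖b - a‖ := by
    apply Convex.norm_image_sub_le_of_norm_hasFDerivWithin_le'
      (f := h) (f' := fderiv ℝ h) (s := Metric.closedBall a ‖b - a‖)
    · exact fun z _ => (hd z).hasFDerivAt.hasFDerivWithinAt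
    · intro z hz
      rw [fderiv_sub_norm_eq]
      calc ‖gradient h z - gradient h a‖ ≤ L * ‖z - a‖ := hlip z a
        _ ≤ L * ‖b - a‖ := by
            apply mul_le_mul_of_nonneg_left _ hL
            simpa [Metric.mem_closedBall, dist_eq_norm] using hz
    · exact convex_closedBall _ _
    · exact Metric.mem_closedBall_self (norm_nonneg _)
    · simp [Metric.mem_closedBall, dist_eq_norm]
  rw [grad_inner_eq, ← Real.norm_eq_abs]
  calc ‖h b - h a - fderiv ℝ h a (b - a)‖ ≤ L * ‖b - a‖ * ‖b - a‖ := key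
    _ = L * ‖b - a‖ ^ 2 := by ring

lemma key_bound (g : E → ℝ) (hg : Differentiable ℝ g) (L ε r : ℝ)
    (hL : 0 < L) (hε : 0 ≤ ε) (hr : 0 < r)
    (hlip : ∀ a b, ‖gradient g a - gradient g b‖ ≤ L * ‖a - b‖)
    (hnet : ∀ y : E, ∃ p, |g p| ≤ ε ∧ ‖y - p‖ ≤ r) (x : E) :
    ‖gradient g x‖ ≤ 2 * Real.sqrt (L * ε + 3 * L ^ 2 * r ^ 2) + 3 * L * r := by
  obtain ⟨w, hw⟩ : ∃ w, w = gradient g x := ⟨_, rfl⟩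
  obtain ⟨G, hG⟩ : ∃ G, G = ‖gradient g x‖ := ⟨_, rfl⟩
  rw [← hG]
  rcases eq_or_lt_of_le (hG ▸ norm_nonneg (gradient g x) : (0:ℝ) ≤ G) with h0 | hGpos
  · rw [← h0]; positivity
  obtain ⟨s, hs_def⟩ : ∃ s, s = Real.sqrt (ε / L + 3 * r ^ 2) := ⟨_, rfl⟩
  have hargpos : 0 < ε / L + 3 * r ^ 2 := by positivity
  have hs : 0 < s := hs_def ▸ Real.sqrt_pos.mpr hargpos
  have hs2 : s ^ 2 = ε / L + 3 * r ^ 2 := hs_def ▸ Real.sq_sqrt hargpos.le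
  obtain ⟨t, ht_def⟩ : ∃ t, t = s + r := ⟨_, rfl⟩
  have ht : 0 < t := by rw [ht_def]; positivity
  obtain ⟨v, hv_def⟩ : ∃ v : E, v = (t / G) • w := ⟨_, rfl⟩
  have hGw : G = ‖w‖ := by rw [hG, hw]
  have hvnorm : ‖v‖ = t := by
    rw [hv_def, norm_smul, Real.norm_eq_abs, abs_of_pos (by positivity), ← hGw,
      div_mul_cancel₀ _ (ne_of_gt hGpos)]
  have hinner : ⟪w, v⟫ = t * G := by
    rw [hv_def, real_inner_smul_right, real_inner_self_eq_norm_sq, ← hGw]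
    field_simp
  have T1 : |g (x + v) - g x - t * G| ≤ L * t ^ 2 := by
    have h := taylor_aux g hg L hL.le hlip x (x + v)
    rwa [add_sub_cancel_left, ← hw, hinner, hvnorm] at h
  have T2 : |g (x - v) - g x + t * G| ≤ L * t ^ 2 := by
    have h := taylor_aux g hg L hL.le hlip x (x - v)
    rw [sub_sub_cancel_left, inner_neg_right, norm_neg, ← hw, hinner, hvnorm] at h
    convert h using 2
    ring
  have hnear : ∀ y : E, ‖y - x‖ = t → |g y| ≤ ε + (G + L * t) * r + L * r ^ 2 := by
    intro y hy
    obtain ⟨p, hp1, hp2⟩ := hnet y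
    have hpy : ‖p - y‖ ≤ r := by rwa [norm_sub_rev] at hp2
    have Tp : |g p - g y - ⟪gradient g y, p - y⟫| ≤ L * r ^ 2 := by
      calc |g p - g y - ⟪gradient g y, p - y⟫| ≤ L * ‖p - y‖ ^ 2 :=
            taylor_aux g hg L hL.le hlip y p
        _ ≤ L * r ^ 2 := by
            apply mul_le_mul_of_nonneg_left _ hL.le
            nlinarith [norm_nonneg (p - y)]
    have hgy : ‖gradient g y‖ ≤ G + L * t := by
      have h1 : ‖gradient g y - gradient g x‖ ≤ L * ‖y - x‖ := hlip y x
      have h2 : ‖gradient g y‖ ≤ ‖gradient g y - gradient g x‖ + ‖gradient g x‖ := by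
        simpa using norm_add_le (gradient g y - gradient g x) (gradient g x)
      rw [hy] at h1
      rw [← hG] at h2
      linarith
    have hinn : |⟪gradient g y, p - y⟫| ≤ (G + L * t) * r := by
      calc |⟪gradient g y, p - y⟫| ≤ ‖gradient g y‖ * ‖p - y‖ := abs_real_inner_le_norm _ _
        _ ≤ (G + L * t) * r := by
            apply mul_le_mul hgy hpy (norm_nonneg _)
            positivity
    rcases abs_le.mp Tp with ⟨tp1, tp2⟩
    rcases abs_le.mp hp1 with ⟨q1, q2⟩
    rcases abs_le.mp hinn with ⟨i1, i2⟩
    apply abs_le.mpr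
    constructor <;> linarith
  have hy1 := hnear (x + v) (by rw [add_sub_cancel_left, hvnorm])
  have hy2 := hnear (x - v) (by rw [sub_sub_cancel_left, norm_neg, hvnorm])
  rcases abs_le.mp T1 with ⟨a1, a2⟩
  rcases abs_le.mp T2 with ⟨b1, b2⟩
  rcases abs_le.mp hy1 with ⟨c1, c2⟩
  rcases abs_le.mp hy2 with ⟨d1, d2⟩
  have hmain : G * s ≤ ε + L * (t ^ 2 + t * r + r ^ 2) := by
    have hts : s = t - r := by rw [ht_def]; ring
    rw [hts]
    nlinarith
  have hLs2 : L * s ^ 2 = ε + 3 * L * r ^ 2 := by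
    rw [hs2]
    field_simp
  have hGle : G ≤ 2 * L * s + 3 * L * r := by
    have expand : ε + L * (t ^ 2 + t * r + r ^ 2) = (2 * L * s + 3 * L * r) * s := by
      rw [ht_def]
      linear_combination -hLs2
    rw [expand] at hmain
    exact le_of_mul_le_mul_right hmain hs
  have hsqrt : L * s = Real.sqrt (L * ε + 3 * L ^ 2 * r ^ 2) := by
    have h1 : L * ε + 3 * L ^ 2 * r ^ 2 = L ^ 2 * (ε / L + 3 * r ^ 2) := by
      field_simp
    rw [h1, Real.sqrt_mul (sq_nonneg L), Real.sqrt_sq hL.le, hs_def]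
  calc G ≤ 2 * L * s + 3 * L * r := hGle
    _ = 2 * Real.sqrt (L * ε + 3 * L ^ 2 * r ^ 2) + 3 * L * r := by rw [← hsqrt]; ring

lemma gradient_sub' (f g : E → ℝ) {x : E} (hf : DifferentiableAt ℝ f x)
    (hg : DifferentiableAt ℝ g x) :
    gradient (fun y => f y - g y) x = gradient f x - gradient g x := by
  simp only [gradient]
  rw [fderiv_fun_sub hf hg, map_sub]

end


/-- As data density increases (`rₖ → 0`) and training error decreases (`εₖ → 0`), the
gradients of the learned models `f̂ₖ` converge uniformly to the gradient of the true
function `f`, with the explicit bound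
`‖∇f̂ₖ(x) - ∇f(x)‖ ≤ 4√(6rₖ²c² + εₖc) + 10rₖc → 0`. -/
theorem stmt_6 (N : ℕ) (hN : 1 ≤ N)
    (f : EuclideanSpace ℝ (Fin N) → ℝ) (hf : Differentiable ℝ f)
    (c : ℝ) (hc : 0 < c)
    (hflip : ∀ a b, ‖gradient f a - gradient f b‖ ≤ c * ‖a - b‖)
    (fhat : ℕ → EuclideanSpace ℝ (Fin N) → ℝ)
    (hfhat : ∀ k, Differentiable ℝ (fhat k))
    (hfhatlip : ∀ k, ∀ a b, ‖gradient (fhat k) a - gradient (fhat k) b‖ ≤ c * ‖a - b‖)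
    (D : ℕ → Set (EuclideanSpace ℝ (Fin N)))
    (ε : ℕ → ℝ) (hε : ∀ k, 0 ≤ ε k) (r : ℕ → ℝ) (hr : ∀ k, 0 < r k)
    (hD : ∀ k, ∀ p ∈ D k, |fhat k p - f p| ≤ ε k)
    (hfill : ∀ k, ∀ x : EuclideanSpace ℝ (Fin N), ∃ p ∈ D k, ‖x - p‖ ≤ r k)
    (hrlim : Tendsto r atTop (nhds 0)) (hεlim : Tendsto ε atTop (nhds 0)) :
    (∀ k, ∀ x : EuclideanSpace ℝ (Fin N),
        ‖gradient (fhat k) x - gradient f x‖ ≤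
          4 * Real.sqrt (6 * (r k) ^ 2 * c ^ 2 + ε k * c) + 10 * r k * c) ∧
      Tendsto (fun k => 4 * Real.sqrt (6 * (r k) ^ 2 * c ^ 2 + ε k * c) + 10 * r k * c)
        atTop (nhds 0) ∧
      TendstoUniformly (fun k => gradient (fhat k)) (gradient f) atTop := by

  have hbound : ∀ k, ∀ x : EuclideanSpace ℝ (Fin N),
      ‖gradient (fhat k) x - gradient f x‖ ≤
        4 * Real.sqrt (6 * (r k) ^ 2 * c ^ 2 + ε k * c) + 10 * r k * c := by
    intro k x
    have hgdiff : Differentiable ℝ (fun y => fhat k y - f y) := (hfhat k).sub hf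
    have hgrad : ∀ y, gradient (fun y => fhat k y - f y) y =
        gradient (fhat k) y - gradient f y := fun y =>
      gradient_sub' (fhat k) f ((hfhat k) y) (hf y)
    have hglip : ∀ a b, ‖gradient (fun y => fhat k y - f y) a -
        gradient (fun y => fhat k y - f y) b‖ ≤ (2 * c) * ‖a - b‖ := by
      intro a b
      rw [hgrad a, hgrad b]
      calc ‖(gradient (fhat k) a - gradient f a) - (gradient (fhat k) b - gradient f b)‖
          = ‖(gradient (fhat k) a - gradient (fhat k) b) - (gradient f a - gradient f b)‖ := by
            congr 1
            abel
        _ ≤ ‖gradient (fhat k) a - gradient (fhat k) b‖ + ‖gradient f a - gradient f b‖ :=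
            norm_sub_le _ _
        _ ≤ c * ‖a - b‖ + c * ‖a - b‖ := add_le_add (hfhatlip k a b) (hflip a b)
        _ = (2 * c) * ‖a - b‖ := by ring
    have hnet : ∀ y : EuclideanSpace ℝ (Fin N),
        ∃ p, |fhat k p - f p| ≤ ε k ∧ ‖y - p‖ ≤ r k := by
      intro y
      obtain ⟨p, hpD, hpr⟩ := hfill k y
      exact ⟨p, hD k p hpD, hpr⟩
    have key := key_bound (fun y => fhat k y - f y) hgdiff (2 * c) (ε k) (r k)
      (by positivity) (hε k) (hr k) hglip hnet x
    rw [hgrad x] at key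
    have hsq : Real.sqrt (2 * c * ε k + 3 * (2 * c) ^ 2 * (r k) ^ 2) ≤
        2 * Real.sqrt (6 * (r k) ^ 2 * c ^ 2 + ε k * c) := by
      have h4 : (2:ℝ) * Real.sqrt (6 * (r k) ^ 2 * c ^ 2 + ε k * c) =
          Real.sqrt (4 * (6 * (r k) ^ 2 * c ^ 2 + ε k * c)) := by
        rw [Real.sqrt_mul (by norm_num : (0:ℝ) ≤ 4),
          show Real.sqrt 4 = 2 by
            rw [show (4:ℝ) = 2 ^ 2 by norm_num, Real.sqrt_sq (by norm_num : (0:ℝ) ≤ 2)]]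
      rw [h4]
      apply Real.sqrt_le_sqrt
      nlinarith [hε k, (hr k).le, hc.le, sq_nonneg (r k), mul_nonneg (hε k) hc.le,
        mul_nonneg (mul_nonneg (sq_nonneg (r k)) hc.le) hc.le]
    have hrc : 0 ≤ r k * c := mul_nonneg (hr k).le hc.le
    calc ‖gradient (fhat k) x - gradient f x‖
        ≤ 2 * Real.sqrt (2 * c * ε k + 3 * (2 * c) ^ 2 * (r k) ^ 2) + 3 * (2 * c) * r k := key
      _ ≤ 4 * Real.sqrt (6 * (r k) ^ 2 * c ^ 2 + ε k * c) + 10 * r k * c := by nlinarith [hsq]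
  have hlim : Tendsto (fun k => 4 * Real.sqrt (6 * (r k) ^ 2 * c ^ 2 + ε k * c) + 10 * r k * c)
      atTop (nhds 0) := by
    have h1 : Tendsto (fun k => 6 * (r k) ^ 2 * c ^ 2 + ε k * c) atTop
        (nhds (6 * (0:ℝ) ^ 2 * c ^ 2 + 0 * c)) :=
      (((hrlim.pow 2).const_mul 6).mul_const (c ^ 2)).add (hεlim.mul_const c)
    have h2 : Tendsto (fun k => 4 * Real.sqrt (6 * (r k) ^ 2 * c ^ 2 + ε k * c) + 10 * r k * c)
        atTop (nhds (4 * Real.sqrt (6 * (0:ℝ) ^ 2 * c ^ 2 + 0 * c) + 10 * 0 * c)) := by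
      refine Tendsto.add (Tendsto.const_mul 4 ?_) (((hrlim.const_mul 10).mul_const c).congr ?_)
      · exact (Real.continuous_sqrt.tendsto _).comp h1
      · intro k
        ring
    simpa using h2
  refine ⟨hbound, hlim, ?_⟩
  rw [Metric.tendstoUniformly_iff]
  intro δ hδ
  have hev : ∀ᶠ k in atTop,
      4 * Real.sqrt (6 * (r k) ^ 2 * c ^ 2 + ε k * c) + 10 * r k * c < δ :=
    hlim.eventually_lt_const hδ
  filter_upwards [hev] with k hk x
  calc dist (gradient f x) (gradient (fhat k) x)
      = ‖gradient (fhat k) x - gradient f x‖ := by rw [dist_eq_norm, norm_sub_rev]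
    _ ≤ 4 * Real.sqrt (6 * (r k) ^ 2 * c ^ 2 + ε k * c) + 10 * r k * c := hbound k x
    _ < δ := hk
end

section
/- Let $(a_i)_{i \in \mathbb{N}}$ be a real sequence with $a_i \neq 0$ for all $i$, let $(b_i)_{i \in \mathbb{N}}$ be a bounded real sequence, and let $\gamma > 0$. Let $P_j = \prod_{i=0}^{j-1} a_i$ and suppose the sequence $\left(\frac{1}{n} \log |P_n|\right)_{n \geq 1}$ is bounded with $\limsup_{n \to \infty} \frac{1}{n} \log |P_n| = \lambda \in \mathbb{R}$. Then, with $A_n = \prod_{i=0}^{n-1} \begin{pmatrix} a_i & 0 \\ b_i & \gamma \end{pmatrix}$ (product with index $n-1$ leftmost) and $\|\cdot\|$ the $\ell^2 \to \ell^2$ operator norm, $\limsup_{n \to \infty} \frac{1}{n} \log \|A_n\| = \max(\lambda, \log \gamma)$. -/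
open scoped Matrix.Norms.L2Operator
open Filter

section Helpers

lemma coord_le_norm2 (v : EuclideanSpace ℝ (Fin 2)) (i : Fin 2) : |v i| ≤ ‖v‖ := by
  rw [EuclideanSpace.norm_eq, ← Real.sqrt_sq_eq_abs]
  apply Real.sqrt_le_sqrt
  have := Finset.single_le_sum (f := fun j => ‖v j‖^2) (fun j _ => by positivity) (Finset.mem_univ i)
  simpa [Real.norm_eq_abs, sq_abs] using this

lemma norm_le_sum2 (v : EuclideanSpace ℝ (Fin 2)) : ‖v‖ ≤ |v 0| + |v 1| := by
  rw [EuclideanSpace.norm_eq, Fin.sum_univ_two]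
  rw [show ‖v 0‖^2 + ‖v 1‖^2 = |v 0|^2 + |v 1|^2 by simp [Real.norm_eq_abs]]
  calc Real.sqrt (|v 0|^2 + |v 1|^2) ≤ Real.sqrt ((|v 0| + |v 1|)^2) :=
        Real.sqrt_le_sqrt (by nlinarith [abs_nonneg (v 0), abs_nonneg (v 1)])
    _ = |v 0| + |v 1| := Real.sqrt_sq (by positivity)

lemma entry_le_opnorm (A : Matrix (Fin 2) (Fin 2) ℝ) (i j : Fin 2) : |A i j| ≤ ‖A‖ := by
  have h := A.l2_opNorm_mulVec (EuclideanSpace.single j (1:ℝ))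
  rw [EuclideanSpace.norm_single, norm_one, mul_one] at h
  refine le_trans ?_ h
  have h2 := coord_le_norm2
    ((EuclideanSpace.equiv (Fin 2) ℝ).symm (A.mulVec (EuclideanSpace.single j (1:ℝ)))) i
  refine le_trans (le_of_eq ?_) h2
  congr 1
  show A i j = (A.mulVec (Pi.single j (1:ℝ))) i
  rw [Matrix.mulVec_single_one]
  simp [Matrix.transpose_apply]

lemma opnorm_le_sum (A : Matrix (Fin 2) (Fin 2) ℝ) :
    ‖A‖ ≤ |A 0 0| + |A 0 1| + |A 1 0| + |A 1 1| := by
  rw [Matrix.l2_opNorm_def]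
  refine ContinuousLinearMap.opNorm_le_bound _ (by positivity) fun x => ?_
  have hx0 : |x 0| ≤ ‖x‖ := coord_le_norm2 x 0
  have hx1 : |x 1| ≤ ‖x‖ := coord_le_norm2 x 1
  have hval : ((Matrix.toEuclideanLin.trans LinearMap.toContinuousLinearMap) A) x
      = Matrix.toEuclideanLin A x := rfl
  rw [hval, Matrix.toEuclideanLin_apply]
  refine le_trans (norm_le_sum2 _) ?_
  have e0 : (WithLp.toLp 2 (A.mulVec x.ofLp)) 0
      = A 0 0 * x 0 + A 0 1 * x 1 := by
    simp [Matrix.mulVec, dotProduct, Fin.sum_univ_two]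
  have e1 : (WithLp.toLp 2 (A.mulVec x.ofLp)) 1
      = A 1 0 * x 0 + A 1 1 * x 1 := by
    simp [Matrix.mulVec, dotProduct, Fin.sum_univ_two]
  rw [e0, e1]
  have hxn : (0:ℝ) ≤ ‖x‖ := norm_nonneg x
  have t0 : |A 0 0 * x 0 + A 0 1 * x 1| ≤ |A 0 0| * |x 0| + |A 0 1| * |x 1| :=
    (abs_add_le _ _).trans (by rw [abs_mul, abs_mul])
  have t1 : |A 1 0 * x 0 + A 1 1 * x 1| ≤ |A 1 0| * |x 0| + |A 1 1| * |x 1| :=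
    (abs_add_le _ _).trans (by rw [abs_mul, abs_mul])
  calc |A 0 0 * x 0 + A 0 1 * x 1| + |A 1 0 * x 0 + A 1 1 * x 1|
      ≤ (|A 0 0| * |x 0| + |A 0 1| * |x 1|) + (|A 1 0| * |x 0| + |A 1 1| * |x 1|) :=
        add_le_add t0 t1
    _ ≤ (|A 0 0| * ‖x‖ + |A 0 1| * ‖x‖) + (|A 1 0| * ‖x‖ + |A 1 1| * ‖x‖) := by
        gcongr
    _ = (|A 0 0| + |A 0 1| + |A 1 0| + |A 1 1|) * ‖x‖ := by ring

noncomputable def cseq (a b : ℕ → ℝ) (γ : ℝ) : ℕ → ℝ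
  | 0 => 0
  | n+1 => b n * (∏ i ∈ Finset.range n, a i) + γ * cseq a b γ n

lemma prod_form (a b : ℕ → ℝ) (γ : ℝ) (n : ℕ) :
    ((List.range n).reverse.map (fun i => !![a i, 0; b i, γ])).prod =
      !![∏ i ∈ Finset.range n, a i, 0; cseq a b γ n, γ ^ n] := by
  induction n with
  | zero => simp [cseq, Matrix.one_fin_two]
  | succ n ih =>
      rw [List.range_succ, List.reverse_append]
      simp only [List.reverse_singleton, List.singleton_append, List.map_cons, List.prod_cons, ih]
      rw [Matrix.mul_fin_two, Finset.prod_range_succ, cseq]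
      congr 1 <;> ring_nf

lemma exists_const_bound (f g : ℕ → ℝ) (hg : ∀ n, 0 < g n) (N : ℕ)
    (h : ∀ n, N ≤ n → f n ≤ g n) : ∃ C, 1 ≤ C ∧ ∀ n, f n ≤ C * g n := by
  set C := 1 + ∑ j ∈ Finset.range N, max 0 (f j / g j) with hCdef
  have hsum : 0 ≤ ∑ j ∈ Finset.range N, max 0 (f j / g j) :=
    Finset.sum_nonneg fun j _ => le_max_left 0 _
  have hC1 : 1 ≤ C := by simp only [hCdef]; linarith
  refine ⟨C, hC1, fun n => ?_⟩
  rcases le_or_gt N n with hn | hn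
  · calc f n ≤ g n := h n hn
      _ = 1 * g n := (one_mul _).symm
      _ ≤ C * g n := mul_le_mul_of_nonneg_right hC1 (hg n).le
  · have hmem : n ∈ Finset.range N := Finset.mem_range.2 hn
    have h1 : f n / g n ≤ ∑ j ∈ Finset.range N, max 0 (f j / g j) :=
      le_trans (le_max_right 0 _)
        (Finset.single_le_sum (f := fun j => max (0:ℝ) (f j / g j))
          (fun j _ => le_max_left 0 _) hmem)
    have h2 : f n / g n ≤ C := by simp only [hCdef]; linarith
    calc f n = (f n / g n) * g n := (div_mul_cancel₀ (f n) (hg n).ne').symm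
      _ ≤ C * g n := mul_le_mul_of_nonneg_right h2 (hg n).le

end Helpers

/-- Scalar-state version of Theorem 2: with `aᵢ = f̂_S'(xᵢ) ≠ 0`, bounded `bᵢ = g'(xᵢ)`,
and discount factor `γ > 0`, the maximal Lyapunov exponent of the cumulative-residual
system — the growth rate of the `ℓ² → ℓ²` operator norms of the ordered products
`Aₙ = [[a_{n-1}, 0], [b_{n-1}, γ]] ⋯ [[a₀, 0], [b₀, γ]]` — equals `max(λ, log γ)`, where
`λ = limsup (1/n) log |∏_{i<n} aᵢ|`. -/
theorem stmt_18 (a b : ℕ → ℝ) (ha : ∀ i, a i ≠ 0)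
    (Bb : ℝ) (hb : ∀ i, |b i| ≤ Bb) (γ : ℝ) (hγ : 0 < γ) (lam : ℝ)
    (hbound : ∃ K : ℝ, ∀ n : ℕ, 1 ≤ n →
      abs (1 / (n : ℝ) * Real.log |∏ i ∈ Finset.range n, a i|) ≤ K)
    (hlam : limsup (fun n : ℕ =>
        1 / (n : ℝ) * Real.log |∏ i ∈ Finset.range n, a i|) atTop = lam) :
    limsup (fun n : ℕ =>
        1 / (n : ℝ) *
          Real.log ‖((List.range n).reverse.map (fun i => !![a i, 0; b i, γ])).prod‖) atTop =
      max lam (Real.log γ) := by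
  obtain ⟨K, hK⟩ := hbound
  set P : ℕ → ℝ := fun n => ∏ i ∈ Finset.range n, a i with hPdef
  set u : ℕ → ℝ := fun n => 1 / (n : ℝ) * Real.log |P n| with hudef
  set A : ℕ → Matrix (Fin 2) (Fin 2) ℝ :=
    fun n => ((List.range n).reverse.map (fun i => !![a i, 0; b i, γ])).prod with hAdef
  set L : ℕ → ℝ := fun n => 1 / (n : ℝ) * Real.log ‖A n‖ with hLdef
  have hBb : 0 ≤ Bb := (abs_nonneg _).trans (hb 0)
  have hPne : ∀ n, P n ≠ 0 := fun n => Finset.prod_ne_zero_iff.mpr fun i _ => ha i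
  have hPpos : ∀ n, 0 < |P n| := fun n => abs_pos.mpr (hPne n)
  have hAform : ∀ n, A n = !![P n, 0; cseq a b γ n, γ ^ n] := fun n => prod_form a b γ n
  have hAlow1 : ∀ n, |P n| ≤ ‖A n‖ := by
    intro n
    rw [hAform n]
    exact entry_le_opnorm !![P n, 0; cseq a b γ n, γ ^ n] 0 0
  have hAlow2 : ∀ n, γ ^ n ≤ ‖A n‖ := by
    intro n
    rw [hAform n]
    have h := entry_le_opnorm !![P n, 0; cseq a b γ n, γ ^ n] 1 1
    rw [show (!![P n, 0; cseq a b γ n, γ ^ n] : Matrix (Fin 2) (Fin 2) ℝ) 1 1 = γ ^ n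
      from rfl] at h
    rwa [abs_of_pos (pow_pos hγ n)] at h
  have hApos : ∀ n, 0 < ‖A n‖ := fun n => lt_of_lt_of_le (pow_pos hγ n) (hAlow2 n)
  have hAup : ∀ n, ‖A n‖ ≤ |P n| + γ ^ n + |cseq a b γ n| := by
    intro n
    rw [hAform n]
    have h : ‖(!![P n, 0; cseq a b γ n, γ ^ n] : Matrix (Fin 2) (Fin 2) ℝ)‖
        ≤ |P n| + |(0:ℝ)| + |cseq a b γ n| + |γ ^ n| := opnorm_le_sum _
    rw [abs_zero, abs_of_pos (pow_pos hγ n)] at h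
    linarith
  have hLlow : ∀ n, 1 ≤ n → Real.log γ ≤ L n := by
    intro n hn
    have hn' : (0:ℝ) < n := by exact_mod_cast hn
    have h1 : Real.log (γ ^ n) ≤ Real.log ‖A n‖ := Real.log_le_log (pow_pos hγ n) (hAlow2 n)
    rw [Real.log_pow] at h1
    have := mul_le_mul_of_nonneg_left h1 (le_of_lt (one_div_pos.mpr hn'))
    calc Real.log γ = 1 / (n:ℝ) * ((n:ℕ) * Real.log γ) := by field_simp
      _ ≤ 1 / (n:ℝ) * Real.log ‖A n‖ := this
      _ = L n := rfl
  have huL : ∀ n, 1 ≤ n → u n ≤ L n := by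
    intro n hn
    have h1 : Real.log |P n| ≤ Real.log ‖A n‖ := Real.log_le_log (hPpos n) (hAlow1 n)
    have hn' : (0:ℝ) < n := by exact_mod_cast hn
    exact mul_le_mul_of_nonneg_left h1 (le_of_lt (one_div_pos.mpr hn'))
  -- the main chain of estimates
  have chain : ∀ M C : ℝ, 0 < M → γ ≤ M → 1 ≤ C → (∀ j, |P j| ≤ C * M ^ j) →
      ∀ n, 1 ≤ n → L n ≤ (Real.log (C + 1 + Bb * C / M) + Real.log n) / n + Real.log M := by
    intro M C hM hγM hC hPC
    have hcb : ∀ n : ℕ, |cseq a b γ (n+1)| ≤ Bb * C * (n+1) * M ^ n := by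
      intro n
      induction n with
      | zero =>
          have he : cseq a b γ 1 = b 0 := by simp [cseq]
          rw [he]
          have h0 : Bb * C * (((0:ℕ):ℝ)+1) * M ^ 0 = Bb * C := by norm_num
          have := hb 0
          nlinarith
      | succ n ih =>
          have hstep : cseq a b γ (n+2) = b (n+1) * P (n+1) + γ * cseq a b γ (n+1) := rfl
          rw [hstep]
          have h1 : |b (n+1) * P (n+1)| ≤ Bb * (C * M ^ (n+1)) := by
            rw [abs_mul]
            exact mul_le_mul (hb _) (hPC _) (abs_nonneg _) hBb
          have h2 : γ * |cseq a b γ (n+1)| ≤ M * (Bb * C * (n+1) * M ^ n) :=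
            mul_le_mul hγM ih (abs_nonneg _) hM.le
          calc |b (n+1) * P (n+1) + γ * cseq a b γ (n+1)|
              ≤ |b (n+1) * P (n+1)| + γ * |cseq a b γ (n+1)| := by
                refine (abs_add_le _ _).trans ?_
                rw [abs_mul γ, abs_of_pos hγ]
            _ ≤ Bb * (C * M ^ (n+1)) + M * (Bb * C * (n+1) * M ^ n) := add_le_add h1 h2
            _ = Bb * C * ((n:ℝ)+1+1) * M ^ (n+1) := by rw [pow_succ]; ring
            _ = Bb * C * ((n+1:ℕ)+1) * M ^ (n+1) := by push_cast; ring
    set D := C + 1 + Bb * C / M with hDdef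
    have hD1 : 1 ≤ D := by
      have h0 : 0 ≤ Bb * C / M := by positivity
      simp only [hDdef]; linarith
    have hDpos : 0 < D := lt_of_lt_of_le one_pos hD1
    have hbig : ∀ n, 1 ≤ n → ‖A n‖ ≤ D * n * M ^ n := by
      intro n hn
      obtain ⟨m, rfl⟩ : ∃ m, n = m + 1 := ⟨n - 1, by omega⟩
      have h := hAup (m+1)
      have hγn : γ ^ (m+1) ≤ M ^ (m+1) := pow_le_pow_left₀ hγ.le hγM _
      have hc : |cseq a b γ (m+1)| ≤ Bb * C * (m+1) * M ^ m := hcb m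
      have hkey : D * ((m:ℝ)+1) * M ^ (m+1)
          = C * ((m:ℝ)+1) * M ^ (m+1) + ((m:ℝ)+1) * M ^ (m+1) + Bb * C * ((m:ℝ)+1) * M ^ m := by
        rw [hDdef, pow_succ]
        field_simp
      have hm0 : (0:ℝ) ≤ (m:ℝ) := Nat.cast_nonneg m
      have hm1 : (1:ℝ) ≤ (m:ℝ) + 1 := by linarith
      have hMp1 : (0:ℝ) < M ^ (m+1) := pow_pos hM _
      have hC0 : (0:ℝ) ≤ C := le_trans zero_le_one hC
      have hPC1 := hPC (m+1)
      have e1 : C * M ^ (m+1) ≤ C * ((m:ℝ)+1) * M ^ (m+1) := by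
        nlinarith [mul_nonneg (mul_nonneg hC0 hm0) hMp1.le]
      have e2 : M ^ (m+1) ≤ ((m:ℝ)+1) * M ^ (m+1) := by
        nlinarith [mul_nonneg hm0 hMp1.le]
      have : ‖A (m+1)‖ ≤ C * M ^ (m+1) + M ^ (m+1) + Bb * C * ((m:ℝ)+1) * M ^ m := by
        push_cast at hc ⊢
        linarith
      calc ‖A (m+1)‖ ≤ C * M ^ (m+1) + M ^ (m+1) + Bb * C * ((m:ℝ)+1) * M ^ m := this
        _ ≤ C * ((m:ℝ)+1) * M ^ (m+1) + ((m:ℝ)+1) * M ^ (m+1) + Bb * C * ((m:ℝ)+1) * M ^ m := by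
            linarith
        _ = D * ((m:ℝ)+1) * M ^ (m+1) := hkey.symm
        _ = D * ((m+1:ℕ):ℝ) * M ^ (m+1) := by push_cast; ring
    intro n hn
    have hn' : (0:ℝ) < n := by exact_mod_cast hn
    have hbig' := hbig n hn
    have hDnM : (0:ℝ) < D * n * M ^ n := by positivity
    have hlog : Real.log ‖A n‖ ≤ Real.log (D * n * M ^ n) :=
      Real.log_le_log (hApos n) hbig'
    have hsplit : Real.log (D * n * M ^ n) = Real.log D + Real.log n + n * Real.log M := by
      rw [Real.log_mul (by positivity) (by positivity),
        Real.log_mul hDpos.ne' hn'.ne', Real.log_pow]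
    rw [hsplit] at hlog
    have hmul := mul_le_mul_of_nonneg_left hlog (le_of_lt (one_div_pos.mpr hn'))
    calc L n = 1 / (n:ℝ) * Real.log ‖A n‖ := rfl
      _ ≤ 1 / (n:ℝ) * (Real.log D + Real.log n + n * Real.log M) := hmul
      _ = (Real.log D + Real.log n) / n + Real.log M := by field_simp
  -- crude global bound giving boundedness of L from above
  have hLbdd : IsBoundedUnder (· ≤ ·) atTop L := by
    set Mc := max γ (Real.exp K) with hMcdef
    have hMc : 0 < Mc := lt_of_lt_of_le (Real.exp_pos K) (le_max_right _ _)
    have hγMc : γ ≤ Mc := le_max_left _ _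
    have hcr : ∀ j, |P j| ≤ 1 * Mc ^ j := by
      intro j
      rw [one_mul]
      rcases Nat.eq_zero_or_pos j with h | h
      · subst h; simp [hPdef]
      · have hj' : (0:ℝ) < j := by exact_mod_cast h
        have hu := hK j h
        have h1 : u j ≤ K := le_trans (le_abs_self _) hu
        have h2 : Real.log |P j| ≤ (j:ℝ) * K := by
          have := mul_le_mul_of_nonneg_left h1 hj'.le
          have heq : (j:ℝ) * u j = Real.log |P j| := by
            simp only [hudef]; field_simp
          linarith [heq ▸ this]
        calc |P j| = Real.exp (Real.log |P j|) := (Real.exp_log (hPpos j)).symm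
          _ ≤ Real.exp ((j:ℝ) * K) := Real.exp_le_exp.2 h2
          _ = Real.exp K ^ j := Real.exp_nat_mul K j
          _ ≤ Mc ^ j := pow_le_pow_left₀ (Real.exp_pos K).le (le_max_right _ _) j
    have hch := chain Mc 1 hMc hγMc le_rfl hcr
    set D0 := (1:ℝ) + 1 + Bb * 1 / Mc with hD0def
    refine ⟨|Real.log D0| + 1 + Real.log Mc, eventually_map.2 ?_⟩
    filter_upwards [eventually_ge_atTop 1] with n hn
    have hn' : (0:ℝ) < n := by exact_mod_cast hn
    have h1 := hch n hn
    have hlogn : Real.log n ≤ (n:ℝ) - 1 := Real.log_le_sub_one_of_pos hn'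
    have h2 : (Real.log D0 + Real.log n) / n ≤ |Real.log D0| + 1 := by
      rw [div_le_iff₀ hn']
      have ha1 : Real.log D0 ≤ |Real.log D0| := le_abs_self _
      have ha2 : (0:ℝ) ≤ |Real.log D0| := abs_nonneg _
      have hn1 : (1:ℝ) ≤ n := by exact_mod_cast hn
      nlinarith
    calc L n ≤ (Real.log D0 + Real.log n) / n + Real.log Mc := h1
      _ ≤ |Real.log D0| + 1 + Real.log Mc := by linarith
  have hLcob : IsCoboundedUnder (· ≤ ·) atTop L := by
    refine IsBoundedUnder.isCoboundedUnder_le ⟨Real.log γ, eventually_map.2 ?_⟩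
    filter_upwards [eventually_ge_atTop 1] with n hn
    exact hLlow n hn
  have huB : IsBoundedUnder (· ≤ ·) atTop u := by
    refine ⟨K, eventually_map.2 ?_⟩
    filter_upwards [eventually_ge_atTop 1] with n hn
    exact le_trans (le_abs_self _) (hK n hn)
  have huCob : IsCoboundedUnder (· ≤ ·) atTop u := by
    refine IsBoundedUnder.isCoboundedUnder_le ⟨-K, eventually_map.2 ?_⟩
    filter_upwards [eventually_ge_atTop 1] with n hn
    exact neg_le_of_abs_le (hK n hn)
  -- lower bounds
  have h1 : lam ≤ limsup L atTop := by
    rw [← hlam]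
    exact limsup_le_limsup (eventually_atTop.2 ⟨1, huL⟩) huCob hLbdd
  have h2 : Real.log γ ≤ limsup L atTop := by
    refine le_limsup_of_frequently_le ?_ hLbdd
    exact ((eventually_atTop.2 ⟨1, hLlow⟩).frequently)
  -- upper bound
  have h3 : limsup L atTop ≤ max lam (Real.log γ) := by
    refine le_of_forall_pos_le_add fun ε hε => ?_
    set M := max γ (Real.exp (lam + ε)) with hMdef
    have hM : 0 < M := lt_of_lt_of_le (Real.exp_pos _) (le_max_right _ _)
    have hγM : γ ≤ M := le_max_left _ _
    have hev : ∀ᶠ n in atTop, u n < lam + ε :=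
      eventually_lt_of_limsup_lt (by rw [hlam]; linarith) huB
    obtain ⟨N, hN⟩ := eventually_atTop.1 hev
    have hPM : ∀ n, max N 1 ≤ n → |P n| ≤ M ^ n := by
      intro n hn
      have hn1 : 1 ≤ n := le_trans (le_max_right _ _) hn
      have hnN : N ≤ n := le_trans (le_max_left _ _) hn
      have hn' : (0:ℝ) < n := by exact_mod_cast hn1
      have hun := (hN n hnN).le
      have h2' : Real.log |P n| ≤ (n:ℝ) * (lam + ε) := by
        have := mul_le_mul_of_nonneg_left hun hn'.le
        have heq : (n:ℝ) * u n = Real.log |P n| := by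
          simp only [hudef]; field_simp
        linarith [heq ▸ this]
      calc |P n| = Real.exp (Real.log |P n|) := (Real.exp_log (hPpos n)).symm
        _ ≤ Real.exp ((n:ℝ) * (lam + ε)) := Real.exp_le_exp.2 h2'
        _ = Real.exp (lam + ε) ^ n := Real.exp_nat_mul _ n
        _ ≤ M ^ n := pow_le_pow_left₀ (Real.exp_pos _).le (le_max_right _ _) n
    obtain ⟨C, hC1, hC⟩ :=
      exists_const_bound (fun n => |P n|) (fun n => M ^ n) (fun n => pow_pos hM n) (max N 1) hPM
    have hch := chain M C hM hγM hC1 hC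
    set D := C + 1 + Bb * C / M with hDdef
    set R : ℕ → ℝ := fun n => (Real.log D + Real.log n) / n + Real.log M with hRdef
    have hRt : Tendsto R atTop (nhds (Real.log M)) := by
      have hlogdiv : Tendsto (fun n : ℕ => Real.log n / n) atTop (nhds 0) := by
        have := (Real.tendsto_pow_log_div_mul_add_atTop 1 0 1 one_ne_zero).comp
          tendsto_natCast_atTop_atTop
        simpa [Function.comp_def] using this
      have hconst : Tendsto (fun n : ℕ => Real.log D / n) atTop (nhds 0) :=
        tendsto_const_div_atTop_nhds_zero_nat _
      have hsum : Tendsto (fun n : ℕ => (Real.log D + Real.log n) / n) atTop (nhds 0) := by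
        have := hconst.add hlogdiv
        simp only [add_zero] at this
        refine this.congr fun n => ?_
        rw [← add_div]
      have := hsum.add (tendsto_const_nhds (x := Real.log M))
      simpa using this
    have hle : limsup L atTop ≤ limsup R atTop :=
      limsup_le_limsup (eventually_atTop.2 ⟨1, hch⟩) hLcob hRt.isBoundedUnder_le
    rw [hRt.limsup_eq] at hle
    have hlogM : Real.log M ≤ max lam (Real.log γ) + ε := by
      rcases max_cases γ (Real.exp (lam + ε)) with ⟨hm, _⟩ | ⟨hm, _⟩
      · rw [hMdef, hm]
        have : Real.log γ ≤ max lam (Real.log γ) := le_max_right _ _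
        linarith
      · rw [hMdef, hm, Real.log_exp]
        have : lam ≤ max lam (Real.log γ) := le_max_left _ _
        linarith
    linarith
  exact le_antisymm h3 (max_le h1 h2)
end
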